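/- Let f : Ω × □ × ℝ^m → [0,∞) be a function such that (i) for every y ∈ □ the function (x,z) ↦ f(x, y, z) is continuous on Ω × ℝ^m, and (ii) for every x ∈ Ω and z ∈ ℝ^m the function y ↦ f(x, y, z) is Lebesgue measurable on □. Then f is an admissible integrand (with n = 1): for every δ > 0 there exist a compact set X ⊆ Ω with |Ω \ X| ≤ δ and a compact set Y ⊆ □ with |□ \ Y| ≤ δ such that the restriction of f to X × Y × ℝ^m is continuous. -/

import Mathlib

open MeasureTheory Filter Topology

/-- The unit cell `□ = [0,1)^d` in `ℝ^d`. -/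
def unitCell (d : ℕ) : Set (Fin d → ℝ) := Set.univ.pi fun _ => Set.Ico (0 : ℝ) 1

open Metric Set


section aux
variable {α β : Type*} [TopologicalSpace α] [TopologicalSpace β] {f : α → β}

lemma continuousOn_union_closed {s t : Set α} (hs : IsClosed s) (ht : IsClosed t)
    (hfs : ContinuousOn f s) (hft : ContinuousOn f t) : ContinuousOn f (s ∪ t) := by
  intro x hx
  have h1 : ContinuousWithinAt f s x := by
    by_cases h : x ∈ s
    · exact hfs x h
    · exact continuousWithinAt_of_notMem_closure (by rwa [hs.closure_eq])
  have h2 : ContinuousWithinAt f t x := by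
    by_cases h : x ∈ t
    · exact hft x h
    · exact continuousWithinAt_of_notMem_closure (by rwa [ht.closure_eq])
  exact h1.union h2

lemma continuousOn_finset_biUnion {ι : Type*} (t : Finset ι) {K : ι → Set α}
    (hK : ∀ i ∈ t, IsClosed (K i)) (hf : ∀ i ∈ t, ContinuousOn f (K i)) :
    ContinuousOn f (⋃ i ∈ t, K i) := by
  classical
  induction t using Finset.induction with
  | empty => simp
  | insert a s h ih =>
    rw [Finset.set_biUnion_insert]
    exact continuousOn_union_closed (hK a (Finset.mem_insert_self a s))
      ((s.finite_toSet).isClosed_biUnion fun i hi => hK i (Finset.mem_insert_of_mem hi))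
      (hf a (Finset.mem_insert_self a s))
      (ih (fun i hi => hK i (Finset.mem_insert_of_mem hi))
        (fun i hi => hf i (Finset.mem_insert_of_mem hi)))

end aux

lemma tsum_ofReal_halfgeo {δ : ℝ} (hδ : 0 ≤ δ) :
    ∑' k : ℕ, ENNReal.ofReal (δ / 2 * (1 / 2) ^ k) = ENNReal.ofReal δ := by
  rw [← ENNReal.ofReal_tsum_of_nonneg (fun n => by positivity)
      ((summable_geometric_two).mul_left _)]
  rw [tsum_mul_left, tsum_geometric_two]
  norm_num

lemma measurable_of_dense_closedBalls {α E : Type*} [MeasurableSpace α] [MetricSpace E]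
    {mE : MeasurableSpace E} [BorelSpace E] {D : Set E} (hDc : D.Countable) (hD : Dense D)
    {F : α → E}
    (h : ∀ c ∈ D, ∀ q : ℚ, 0 < q → MeasurableSet {y | dist (F y) c ≤ (q : ℝ)}) :
    Measurable F := by
  suffices h' : ∀ U : Set E, IsOpen U → MeasurableSet (F ⁻¹' U) by
    have : @Measurable α E _ (borel E) F := measurable_generateFrom fun t ht => h' t ht
    rwa [← BorelSpace.measurable_eq (α := E)] at this
  intro U hUopen
  classical
  set S : Set (E × ℚ) := {p | p.1 ∈ D ∧ 0 < p.2 ∧ closedBall p.1 (p.2 : ℝ) ⊆ U} with hS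
  have hU : U = ⋃ p ∈ S, closedBall p.1 (p.2 : ℝ) := by
    apply Subset.antisymm
    · intro u hu
      obtain ⟨ε, hε, hb⟩ := Metric.isOpen_iff.mp hUopen u hu
      obtain ⟨c, hcD, hc⟩ := hD.exists_dist_lt u (show (0:ℝ) < ε / 4 by positivity)
      obtain ⟨q, hq1, hq2⟩ := exists_rat_btwn (show ε / 4 < ε / 2 by linarith)
      have hq0 : (0:ℚ) < q := by
        have : (0:ℝ) < q := lt_trans (by positivity) hq1
        exact_mod_cast this
      refine mem_biUnion (show (c, q) ∈ S from ⟨hcD, hq0, ?_⟩) ?_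
      · intro v hv
        rw [mem_closedBall] at hv
        apply hb
        rw [mem_ball]
        have : dist v u ≤ dist v c + dist c u := dist_triangle v c u
        rw [dist_comm c u] at this
        linarith
      · rw [mem_closedBall]
        linarith
    · exact iUnion₂_subset fun p hp => hp.2.2
  rw [hU, preimage_iUnion₂]
  have hScount : S.Countable := by
    apply (hDc.prod (countable_univ (α := ℚ))).mono
    intro p hp
    exact ⟨hp.1, trivial⟩
  refine MeasurableSet.biUnion hScount fun p hp => ?_
  have : F ⁻¹' closedBall p.1 (p.2 : ℝ) = {y | dist (F y) p.1 ≤ (p.2 : ℝ)} := by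
    ext y; simp [mem_closedBall]
  rw [this]
  exact h p.1 hp.1 p.2 hp.2.1

/-- **Lusin's theorem** for a.e. strongly measurable maps into a metric space,
on `ℝ^d` with Lebesgue measure. -/
lemma lusin_theorem {d : ℕ} {E : Type*} [MetricSpace E] {F : (Fin d → ℝ) → E}
    {s : Set (Fin d → ℝ)} (hs : MeasurableSet s) (hsf : volume s ≠ ⊤)
    (hF : AEStronglyMeasurable F (volume.restrict s)) {ε : ℝ} (hε : 0 < ε) :
    ∃ K, IsCompact K ∧ K ⊆ s ∧ volume (s \ K) ≤ ENNReal.ofReal ε ∧ ContinuousOn F K := by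
  obtain ⟨g, hgsm, hgae⟩ := hF
  -- remove the null set where F ≠ g
  set T := toMeasurable (volume.restrict s) {y | F y ≠ g y} with hT
  have hTm : MeasurableSet T := measurableSet_toMeasurable _ _
  have hT0 : volume.restrict s T = 0 := by
    rw [measure_toMeasurable]
    exact hgae
  set s₀ : Set (Fin d → ℝ) := s \ T with hs₀
  have hs₀m : MeasurableSet s₀ := hs.diff hTm
  have hss₀ : volume (s \ s₀) = 0 := by
    have h1 : s \ s₀ = s ∩ T := by
      rw [hs₀, diff_diff_right_self]
    rw [h1, inter_comm, ← Measure.restrict_apply hTm]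
    exact hT0
  have hs₀f : volume s₀ ≠ ⊤ := (lt_of_le_of_lt (measure_mono diff_subset) hsf.lt_top).ne
  -- Egorov
  obtain ⟨t, hts, htm, htμ, htu⟩ :=
    tendstoUniformlyOn_of_ae_tendsto (μ := volume)
      (f := fun n y => hgsm.approx n y) (g := g) (s := s₀)
      (fun n => (hgsm.approx n).stronglyMeasurable) hgsm hs₀m hs₀f
      (Eventually.of_forall fun y _ => hgsm.tendsto_approx y) (half_pos hε)
  set s₁ : Set (Fin d → ℝ) := s₀ \ t with hs₁
  have hs₁m : MeasurableSet s₁ := hs₀m.diff htm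
  have hs₁f : volume s₁ ≠ ⊤ := (lt_of_le_of_lt (measure_mono diff_subset) hs₀f.lt_top).ne
  -- compact pieces on which each approximating simple function is continuous
  have key : ∀ n : ℕ, ∃ C, IsCompact C ∧ C ⊆ s₁ ∧
      volume (s₁ \ C) ≤ ENNReal.ofReal (ε / 2 / 2 * (1 / 2) ^ n) ∧
      ContinuousOn (fun y => hgsm.approx n y) C := by
    intro n
    set sf := hgsm.approx n with hsf'
    set R : Finset E := sf.range with hR
    set εn := ENNReal.ofReal (ε / 2 / 2 * (1 / 2) ^ n) with hεn
    have hεn0 : εn ≠ 0 := by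
      rw [hεn]
      simp only [ne_eq, ENNReal.ofReal_eq_zero, not_le]
      positivity
    have hchoice : ∀ c : E, ∃ K, K ⊆ sf ⁻¹' {c} ∩ s₁ ∧ IsCompact K ∧
        volume ((sf ⁻¹' {c} ∩ s₁) \ K) < εn / R.card := by
      intro c
      refine MeasurableSet.exists_isCompact_diff_lt
        ((sf.measurableSet_fiber c).inter hs₁m)
        ((lt_of_le_of_lt (measure_mono inter_subset_right) hs₁f.lt_top).ne) ?_
      exact (ENNReal.div_pos hεn0 (ENNReal.natCast_ne_top _)).ne'
    choose K hKsub hKc hKμ using hchoice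
    refine ⟨⋃ c ∈ R, K c, ?_, ?_, ?_, ?_⟩
    · exact R.isCompact_biUnion fun c _ => hKc c
    · exact iUnion₂_subset fun c _ => (hKsub c).trans inter_subset_right
    · have hcover : s₁ \ (⋃ c ∈ R, K c) ⊆ ⋃ c ∈ R, ((sf ⁻¹' {c} ∩ s₁) \ K c) := by
        intro y hy
        refine mem_biUnion (sf.mem_range_self y) ⟨⟨rfl, hy.1⟩, ?_⟩
        intro hmem
        exact hy.2 (mem_biUnion (sf.mem_range_self y) hmem)
      calc volume (s₁ \ ⋃ c ∈ R, K c) ≤ ∑ c ∈ R, volume ((sf ⁻¹' {c} ∩ s₁) \ K c) :=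
            (measure_mono hcover).trans (measure_biUnion_finset_le R _)
        _ ≤ ∑ _c ∈ R, εn / R.card := Finset.sum_le_sum fun c _ => (hKμ c).le
        _ = R.card * (εn / R.card) := by rw [Finset.sum_const, nsmul_eq_mul]
        _ ≤ εn := ENNReal.mul_div_le
    · apply continuousOn_finset_biUnion R (fun c _ => (hKc c).isClosed)
      intro c _
      apply continuousOn_const.congr
      intro y hy
      exact ((hKsub c) hy).1
  choose C hCc hCsub hCμ hCcont using key
  refine ⟨⋂ n, C n, ?_, ?_, ?_, ?_⟩
  · exact (hCc 0).of_isClosed_subset (isClosed_iInter fun n => (hCc n).isClosed)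
      (iInter_subset _ 0)
  · exact ((iInter_subset _ 0).trans (hCsub 0)).trans (diff_subset.trans diff_subset)
  · -- measure bound
    have h1 : s \ ⋂ n, C n ⊆ (s \ s₀) ∪ (s₀ \ s₁) ∪ (s₁ \ ⋂ n, C n) := by
      intro y hy
      by_cases h0 : y ∈ s₀
      · by_cases h1' : y ∈ s₁
        · exact Or.inr ⟨h1', hy.2⟩
        · exact Or.inl (Or.inr ⟨h0, fun h => h1' h⟩)
      · exact Or.inl (Or.inl ⟨hy.1, h0⟩)
    have h2 : volume (s₀ \ s₁) ≤ ENNReal.ofReal (ε / 2) := by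
      have : s₀ \ s₁ ⊆ t := fun y hy => by
        by_contra h
        exact hy.2 ⟨hy.1, h⟩
      exact (measure_mono this).trans htμ
    have h3 : volume (s₁ \ ⋂ n, C n) ≤ ENNReal.ofReal (ε / 2) := by
      have hd : s₁ \ ⋂ n, C n = ⋃ n, (s₁ \ C n) := by
        rw [diff_iInter]
      rw [hd]
      refine (measure_iUnion_le _).trans ?_
      refine (ENNReal.tsum_le_tsum fun n => hCμ n).trans ?_
      exact (tsum_ofReal_halfgeo (show (0:ℝ) ≤ ε / 2 by positivity)).le
    calc volume (s \ ⋂ n, C n)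
        ≤ volume ((s \ s₀) ∪ (s₀ \ s₁)) + volume (s₁ \ ⋂ n, C n) :=
          (measure_mono h1).trans (measure_union_le _ _)
      _ ≤ (volume (s \ s₀) + volume (s₀ \ s₁)) + volume (s₁ \ ⋂ n, C n) :=
          add_le_add (measure_union_le _ _) le_rfl
      _ ≤ (0 + ENNReal.ofReal (ε / 2)) + ENNReal.ofReal (ε / 2) := by
          exact add_le_add (add_le_add hss₀.le h2) h3
      _ = ENNReal.ofReal (ε / 2) + ENNReal.ofReal (ε / 2) := by rw [zero_add]
      _ = ENNReal.ofReal ε := by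
          rw [← ENNReal.ofReal_add (by positivity) (by positivity)]
          norm_num
  · -- continuity
    have hgC : ContinuousOn g (⋂ n, C n) := by
      have hsub : (⋂ n, C n) ⊆ s₁ := (iInter_subset _ 0).trans (hCsub 0)
      apply TendstoUniformlyOn.continuousOn (htu.mono hsub)
      exact Frequently.of_forall fun n => (hCcont n).mono (iInter_subset _ n)
    apply hgC.congr
    intro y hy
    have hy0 : y ∈ s₀ := diff_subset ((iInter_subset _ 0).trans (hCsub 0) hy)
    by_contra h
    exact hy0.2 (subset_toMeasurable _ _ h)

/-- A nonnegative function `f(x,y,z)` on `Ω × □ × ℝ^m` that is continuous in `(x,z)`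
for every `y` and Lebesgue measurable in `y` for every `(x,z)` is an admissible
integrand (case `n = 1`). -/
theorem statement8
    (d m : ℕ) (hd : 0 < d) (hm : 0 < m)
    (Ω : Set (Fin d → ℝ)) (hΩo : IsOpen Ω) (hΩb : Bornology.IsBounded Ω)
    (f : (Fin d → ℝ) → (Fin d → ℝ) → (Fin m → ℝ) → ℝ)
    (hf0 : ∀ x ∈ Ω, ∀ y ∈ unitCell d, ∀ z, 0 ≤ f x y z)
    (hcont : ∀ y ∈ unitCell d,
      ContinuousOn (fun p : (Fin d → ℝ) × (Fin m → ℝ) => f p.1 y p.2) (Ω ×ˢ Set.univ))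
    (hmeas : ∀ x ∈ Ω, ∀ z : Fin m → ℝ,
      AEMeasurable (fun y => f x y z) (volume.restrict (unitCell d))) :
    ∀ δ > (0 : ℝ), ∃ X : Set (Fin d → ℝ),
      IsCompact X ∧ X ⊆ Ω ∧ volume (Ω \ X) ≤ ENNReal.ofReal δ ∧
      ∃ Y : Set (Fin d → ℝ),
        IsCompact Y ∧ Y ⊆ unitCell d ∧ volume (unitCell d \ Y) ≤ ENNReal.ofReal δ ∧
        ContinuousOn
          (fun p : (Fin d → ℝ) × (Fin d → ℝ) × (Fin m → ℝ) => f p.1 p.2.1 p.2.2)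
          (X ×ˢ Y ×ˢ Set.univ) := by
  classical
  intro δ hδ
  have hcellm : MeasurableSet (unitCell d) :=
    MeasurableSet.univ_pi fun _ => measurableSet_Ico
  have hcellf : volume (unitCell d) ≠ ⊤ := by
    rw [unitCell, volume_pi_pi]
    simp
  obtain ⟨X, hXsub, hXc, hXμ⟩ := MeasurableSet.exists_isCompact_diff_lt (μ := volume) hΩo.measurableSet
    hΩb.measure_lt_top.ne (ENNReal.ofReal_pos.mpr hδ).ne'
  have key : ∀ k : ℕ, ∃ Y, IsCompact Y ∧ Y ⊆ unitCell d ∧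
      volume (unitCell d \ Y) ≤ ENNReal.ofReal (δ / 2 * (1 / 2) ^ k) ∧
      ContinuousOn (fun p : (Fin d → ℝ) × (Fin d → ℝ) × (Fin m → ℝ) => f p.1 p.2.1 p.2.2)
        (X ×ˢ Y ×ˢ closedBall (0 : Fin m → ℝ) (k + 1)) := by
    intro k
    set P : Set ((Fin d → ℝ) × (Fin m → ℝ)) := X ×ˢ closedBall (0 : Fin m → ℝ) (k + 1) with hP
    have hPc : IsCompact P := hXc.prod (isCompact_closedBall _ _)
    haveI : CompactSpace ↥P := isCompact_iff_compactSpace.mp hPc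
    have hconta : ∀ y ∈ unitCell d, Continuous fun a : ↥P => f a.1.1 y a.1.2 := by
      intro y hy
      refine continuous_iff_continuousAt.mpr fun a => ?_
      have h2 : ContinuousAt ((fun p : (Fin d → ℝ) × (Fin m → ℝ) => f p.1 y p.2) ∘
          Subtype.val) a :=
        ContinuousAt.comp ((hcont y hy).continuousAt
          ((hΩo.prod isOpen_univ).mem_nhds ⟨hXsub a.2.1, mem_univ _⟩))
          continuous_subtype_val.continuousAt
      exact h2
    set F : (Fin d → ℝ) → C(↥P, ℝ) := fun y =>
      if hy : y ∈ unitCell d then ⟨fun a => f a.1.1 y a.1.2, hconta y hy⟩ else 0 with hF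
    borelize C(↥P, ℝ)
    have hFm : AEStronglyMeasurable F (volume.restrict (unitCell d)) := by
      obtain ⟨DQ, hDQc, hDQd⟩ := TopologicalSpace.exists_countable_dense ↥P
      have hgm : ∀ a : ↥P, AEMeasurable (fun y => f a.1.1 y a.1.2)
          (volume.restrict (unitCell d)) := fun a => hmeas a.1.1 (hXsub a.2.1) a.1.2
      set g : ↥P → (Fin d → ℝ) → ℝ := fun a => (hgm a).mk _ with hg
      have hae : ∀ᵐ y ∂(volume.restrict (unitCell d)),
          y ∈ unitCell d ∧ ∀ a ∈ DQ, f a.1.1 y a.1.2 = g a y := by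
        refine (ae_restrict_mem hcellm).and ?_
        rw [eventually_countable_ball hDQc]
        exact fun a _ => (hgm a).ae_eq_mk
      set N := toMeasurable (volume.restrict (unitCell d))
        {y | ¬(y ∈ unitCell d ∧ ∀ a ∈ DQ, f a.1.1 y a.1.2 = g a y)} with hN
      have hNm : MeasurableSet N := measurableSet_toMeasurable _ _
      have hN0 : volume.restrict (unitCell d) N = 0 := by
        rw [hN, measure_toMeasurable]
        exact ae_iff.mp hae
      have hNc : ∀ y, y ∉ N → y ∈ unitCell d ∧ ∀ a ∈ DQ, f a.1.1 y a.1.2 = g a y := by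
        intro y hy
        by_contra h
        exact hy (subset_toMeasurable _ _ h)
      set F' := N.piecewise (fun _ => (0 : C(↥P, ℝ))) F with hF'
      have hF'meas : Measurable F' := by
        obtain ⟨DE, hDEc, hDEd⟩ := TopologicalSpace.exists_countable_dense C(↥P, ℝ)
        apply measurable_of_dense_closedBalls hDEc hDEd
        intro c _ q hq
        have hq' : (0 : ℝ) ≤ (q : ℝ) := by exact_mod_cast hq.le
        have hset : {y | dist (F' y) c ≤ (q : ℝ)} =
            (N ∩ {y | dist (0 : C(↥P, ℝ)) c ≤ (q : ℝ)}) ∪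
            (Nᶜ ∩ ⋂ a ∈ DQ, {y | dist (g a y) (c a) ≤ (q : ℝ)}) := by
          ext y
          by_cases hy : y ∈ N
          · simp only [mem_union, mem_inter_iff, hy, mem_compl_iff, not_true_eq_false,
              false_and, or_false, true_and, mem_setOf_eq]
            rw [hF', Set.piecewise_eq_of_mem _ _ _ hy]
          · obtain ⟨hycell, hyeq⟩ := hNc y hy
            have hFy : F' y = (⟨fun a => f a.1.1 y a.1.2, hconta y hycell⟩ : C(↥P, ℝ)) := by
              rw [hF', Set.piecewise_eq_of_notMem _ _ _ hy, hF]
              exact dif_pos hycell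
            simp only [mem_union, mem_inter_iff, hy, mem_compl_iff, not_false_eq_true,
              true_and, false_and, false_or, mem_setOf_eq, mem_iInter]
            rw [hFy, ContinuousMap.dist_le hq']
            constructor
            · intro h a ha
              have h2 := h a
              rw [ContinuousMap.coe_mk] at h2
              rw [← hyeq a ha]
              exact h2
            · intro h a
              have hclosed : IsClosed {a : ↥P | dist (f a.1.1 y a.1.2) (c a) ≤ (q : ℝ)} :=
                isClosed_le ((hconta y hycell).dist c.continuous) continuous_const
              have hsub : closure DQ ⊆ {a : ↥P | dist (f a.1.1 y a.1.2) (c a) ≤ (q : ℝ)} := by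
                apply closure_minimal _ hclosed
                intro b hb
                rw [mem_setOf_eq, hyeq b hb]
                exact h b hb
              exact hsub (by rw [hDQd.closure_eq]; exact mem_univ a)
        rw [hset]
        refine (hNm.inter (MeasurableSet.const _)).union (hNm.compl.inter ?_)
        exact MeasurableSet.biInter hDQc fun a _ =>
          measurableSet_le ((hgm a).measurable_mk.dist measurable_const) measurable_const
      refine ⟨F', hF'meas.stronglyMeasurable, ?_⟩
      refine ae_iff.mpr (measure_mono_null ?_ hN0)
      intro y hy
      by_contra hyN
      exact hy (by rw [hF', Set.piecewise_eq_of_notMem _ _ _ hyN])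
    obtain ⟨Y, hYc, hYsub, hYμ, hYcont⟩ := lusin_theorem hcellm hcellf hFm
      (show (0 : ℝ) < δ / 2 * (1 / 2) ^ k by positivity)
    refine ⟨Y, hYc, hYsub, hYμ, ?_⟩
    have hev : ContinuousOn
        (fun w : C(↥P, ℝ) × ((Fin d → ℝ) × (Fin m → ℝ)) =>
          if h : w.2 ∈ P then w.1 ⟨w.2, h⟩ else 0) (univ ×ˢ P) := by
      rw [continuousOn_iff_continuous_restrict]
      have heq : ((univ ×ˢ P).restrict fun w : C(↥P, ℝ) × ((Fin d → ℝ) × (Fin m → ℝ)) =>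
          if h : w.2 ∈ P then w.1 ⟨w.2, h⟩ else 0) =
          fun w : ↥((univ : Set C(↥P, ℝ)) ×ˢ P) => (fun p : C(↥P, ℝ) × ↥P => p.1 p.2)
            (w.1.1, ⟨w.1.2, w.2.2⟩) := by
        funext w
        simp only [Set.restrict_apply]
        exact dif_pos w.2.2
      change Continuous ((univ ×ˢ P).restrict fun w : C(↥P, ℝ) × ((Fin d → ℝ) × (Fin m → ℝ)) =>
          if h : w.2 ∈ P then w.1 ⟨w.2, h⟩ else 0)
      rw [heq]
      exact continuous_eval.comp
        ((continuous_fst.comp continuous_subtype_val).prodMk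
          ((continuous_snd.comp continuous_subtype_val).subtype_mk _))
    have hj : ContinuousOn (fun p : (Fin d → ℝ) × (Fin d → ℝ) × (Fin m → ℝ) =>
        ((F p.2.1 : C(↥P, ℝ)), (p.1, p.2.2))) (X ×ˢ Y ×ˢ closedBall (0 : Fin m → ℝ) (k + 1)) := by
      apply ContinuousOn.prodMk
      · apply hYcont.comp (continuous_fst.comp continuous_snd).continuousOn
        intro p hp
        exact hp.2.1
      · exact (continuous_fst.prodMk (continuous_snd.comp continuous_snd)).continuousOn
    have hmaps : MapsTo (fun p : (Fin d → ℝ) × (Fin d → ℝ) × (Fin m → ℝ) =>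
        ((F p.2.1 : C(↥P, ℝ)), (p.1, p.2.2)))
        (X ×ˢ Y ×ˢ closedBall (0 : Fin m → ℝ) (k + 1)) (univ ×ˢ P) :=
      fun p hp => ⟨mem_univ _, hp.1, hp.2.2⟩
    have hcomp := hev.comp hj hmaps
    apply hcomp.congr
    intro p hp
    have hmem : (p.1, p.2.2) ∈ P := ⟨hp.1, hp.2.2⟩
    show f p.1 p.2.1 p.2.2 =
      if h : (p.1, p.2.2) ∈ P then (F p.2.1) ⟨(p.1, p.2.2), h⟩ else 0
    rw [dif_pos hmem]
    simp only [hF]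
    rw [dif_pos (hYsub hp.2.1)]
    rfl
  choose Y hYc hYsub hYμ hYcont using key
  refine ⟨X, hXc, hXsub, hXμ.le, ⋂ k, Y k, ?_, (iInter_subset _ 0).trans (hYsub 0), ?_, ?_⟩
  · exact (hYc 0).of_isClosed_subset (isClosed_iInter fun k => (hYc k).isClosed)
      (iInter_subset _ 0)
  · rw [diff_iInter]
    refine (measure_iUnion_le _).trans ?_
    refine (ENNReal.tsum_le_tsum fun k => hYμ k).trans ?_
    exact (tsum_ofReal_halfgeo hδ.le).le
  · intro p hp
    obtain ⟨k, hk⟩ := exists_nat_gt ‖p.2.2‖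
    have hball : p.2.2 ∈ ball (0 : Fin m → ℝ) (k + 1) := by
      rw [mem_ball_zero_iff]
      have : (k : ℝ) < k + 1 := by norm_num
      linarith
    have h1 := hYcont k p ⟨hp.1, iInter_subset _ k hp.2.1, ball_subset_closedBall hball⟩
    have ht : (univ ×ˢ univ ×ˢ ball (0 : Fin m → ℝ) (k + 1)) ∈ 𝓝 p :=
      (isOpen_univ.prod (isOpen_univ.prod isOpen_ball)).mem_nhds
        ⟨mem_univ _, mem_univ _, hball⟩
    rw [← continuousWithinAt_inter ht]
    refine h1.mono ?_
    rintro ⟨x, y, z⟩ ⟨⟨hx, hy, -⟩, -, -, hz⟩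
    exact ⟨hx, iInter_subset _ k hy, ball_subset_closedBall hz⟩
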